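/- Let x̂ ∈ ℝⁿ with x̂ ≠ 0, b ∈ ℝᵐ, prior rows âᵢ ∈ ℝⁿ, weights ξᵢ > 0, and a norm ‖·‖ with dual norm ‖·‖*. Define fᵢ = ξᵢ|âᵢᵀx̂ − bᵢ|/‖x̂‖* and gᵢ = fᵢ if âᵢᵀx̂ < bᵢ, gᵢ = 0 otherwise. Then the minimum of Σᵢ ξᵢ‖aᵢ − âᵢ‖ over all matrices A (with rows aᵢ) satisfying Ax̂ ≥ b and a_î ᵀ x̂ = b_î for at least one index î equals min_{i*} ( f_{i*} + Σ_{i ≠ i*} gᵢ ), where i* ranges over all indices. -/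

import Mathlib

/-- Closed-form optimal value of NLO-SD (Theorem on NLO-SD). -/
theorem stmt_5 {n m : ℕ} [NeZero m] (xh : Fin n → ℝ) (hx : xh ≠ 0)
    (b : Fin m → ℝ) (ah : Matrix (Fin m) (Fin n) ℝ) (ξ : Fin m → ℝ)
    (hξ : ∀ i, 0 < ξ i)
    (N : (Fin n → ℝ) → ℝ)
    (hN_add : ∀ u v, N (u + v) ≤ N u + N v)
    (hN_smul : ∀ (t : ℝ) u, N (t • u) = |t| * N u)
    (hN_pos : ∀ u, u ≠ 0 → 0 < N u)
    (Nd : ℝ) (v : Fin n → ℝ)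
    (hv : N v = 1) (hvmax : ∑ j, xh j * v j = Nd)
    (hNd : ∀ w, N w = 1 → ∑ j, xh j * w j ≤ Nd)
    (f g : Fin m → ℝ)
    (hf : ∀ i, f i = ξ i * |(∑ j, ah i j * xh j) - b i| / Nd)
    (hg : ∀ i, g i = if (∑ j, ah i j * xh j) < b i then f i else 0) :
    IsLeast {r | ∃ A : Matrix (Fin m) (Fin n) ℝ,
        (∀ i, ∑ j, A i j * xh j ≥ b i) ∧ (∃ ihat, ∑ j, A ihat j * xh j = b ihat) ∧
        r = ∑ i, ξ i * N (A i - ah i)}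
      (Finset.univ.inf' Finset.univ_nonempty
        (fun k => f k + ∑ i ∈ Finset.univ.erase k, g i)) := by
  have hN0 : N 0 = 0 := by
    have h := hN_smul 0 0
    simpa using h
  have hNnn : ∀ u, 0 ≤ N u := by
    intro u
    by_cases h : u = 0
    · simp [h, hN0]
    · exact (hN_pos u h).le
  -- positivity of Nd
  have hNxh : 0 < N xh := hN_pos xh hx
  have hNd0 : 0 < Nd := by
    have hw : N ((N xh)⁻¹ • xh) = 1 := by
      rw [hN_smul, abs_of_pos (inv_pos.mpr hNxh)]
      field_simp
    have hle := hNd _ hw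
    obtain ⟨j0, hj0⟩ : ∃ j, xh j ≠ 0 := Function.ne_iff.mp hx
    have hsumpos : 0 < ∑ j, xh j * xh j := by
      apply Finset.sum_pos' (fun j _ => mul_self_nonneg _)
      exact ⟨j0, Finset.mem_univ _, mul_self_pos.mpr hj0⟩
    calc 0 < (N xh)⁻¹ * ∑ j, xh j * xh j := mul_pos (inv_pos.mpr hNxh) hsumpos
    _ = ∑ j, xh j * ((N xh)⁻¹ • xh) j := by
        rw [Finset.mul_sum]; apply Finset.sum_congr rfl; intro j _
        simp [Pi.smul_apply, smul_eq_mul]; ring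
    _ ≤ Nd := hle
  -- dual bound
  have dualbound : ∀ u : Fin n → ℝ, |∑ j, u j * xh j| ≤ Nd * N u := by
    intro u
    by_cases h : u = 0
    · simp [h, hN0]
    · have hNu : 0 < N u := hN_pos u h
      have key : ∀ t : ℝ, |t| = 1 → ∑ j, (t • u) j * xh j ≤ Nd * N u := by
        intro t ht
        have hw : N ((N u)⁻¹ • (t • u)) = 1 := by
          rw [hN_smul, hN_smul, abs_of_pos (inv_pos.mpr hNu), ht]
          field_simp
        have hle := hNd _ hw
        have : ∑ j, xh j * ((N u)⁻¹ • (t • u)) j = (N u)⁻¹ * ∑ j, (t • u) j * xh j := by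
          rw [Finset.mul_sum]; apply Finset.sum_congr rfl; intro j _
          simp [Pi.smul_apply, smul_eq_mul]; ring
        rw [this] at hle
        calc ∑ j, (t • u) j * xh j = N u * ((N u)⁻¹ * ∑ j, (t • u) j * xh j) := by
              field_simp
        _ ≤ N u * Nd := by
              apply mul_le_mul_of_nonneg_left hle hNu.le
        _ = Nd * N u := mul_comm _ _
      have h1 := key 1 (by norm_num)
      have h2 := key (-1) (by norm_num)
      simp only [one_smul] at h1
      rw [abs_le]
      constructor
      · have hneg : ∑ j, ((-1 : ℝ) • u) j * xh j = -∑ j, u j * xh j := by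
          rw [← Finset.sum_neg_distrib]
          apply Finset.sum_congr rfl
          intro j _
          simp
        rw [hneg] at h2; linarith
      · exact h1
  -- per-row lower bounds
  have hfle : ∀ (A : Matrix (Fin m) (Fin n) ℝ) i, ∑ j, A i j * xh j = b i →
      f i ≤ ξ i * N (A i - ah i) := by
    intro A i hi
    have hsum : ∑ j, (A i - ah i) j * xh j = (∑ j, A i j * xh j) - (∑ j, ah i j * xh j) := by
      rw [← Finset.sum_sub_distrib]; apply Finset.sum_congr rfl; intro j _
      simp [sub_mul]
    have hb := dualbound (A i - ah i)
    rw [hsum, hi] at hb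
    rw [hf]
    rw [div_le_iff₀ hNd0]
    have : |(∑ j, ah i j * xh j) - b i| = |b i - ∑ j, ah i j * xh j| := abs_sub_comm _ _
    rw [this]
    calc ξ i * |b i - ∑ j, ah i j * xh j| ≤ ξ i * (Nd * N (A i - ah i)) :=
          mul_le_mul_of_nonneg_left hb (hξ i).le
    _ = ξ i * N (A i - ah i) * Nd := by ring
  have hgle : ∀ (A : Matrix (Fin m) (Fin n) ℝ) i, b i ≤ ∑ j, A i j * xh j →
      g i ≤ ξ i * N (A i - ah i) := by
    intro A i hi
    rw [hg]
    split_ifs with hc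
    · have hsum : ∑ j, (A i - ah i) j * xh j = (∑ j, A i j * xh j) - (∑ j, ah i j * xh j) := by
        rw [← Finset.sum_sub_distrib]; apply Finset.sum_congr rfl; intro j _
        simp [sub_mul]
      have hb := (le_abs_self _).trans (dualbound (A i - ah i))
      rw [hsum] at hb
      rw [hf, div_le_iff₀ hNd0]
      have h1 : |(∑ j, ah i j * xh j) - b i| = b i - ∑ j, ah i j * xh j := by
        rw [abs_sub_comm]; exact abs_of_pos (by linarith)
      rw [h1]
      calc ξ i * (b i - ∑ j, ah i j * xh j)
          ≤ ξ i * ((∑ j, A i j * xh j) - (∑ j, ah i j * xh j)) := by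
            apply mul_le_mul_of_nonneg_left _ (hξ i).le; linarith
      _ ≤ ξ i * (Nd * N (A i - ah i)) := mul_le_mul_of_nonneg_left hb (hξ i).le
      _ = ξ i * N (A i - ah i) * Nd := by ring
    · exact mul_nonneg (hξ i).le (hNnn _)
  constructor
  · -- membership: build A for the minimizing k
    obtain ⟨k, -, hk⟩ := Finset.exists_mem_eq_inf' Finset.univ_nonempty
      (fun k => f k + ∑ i ∈ Finset.univ.erase k, g i)
    rw [hk]
    set c : Fin m → ℝ := fun i =>
      if i = k then (b k - ∑ j, ah k j * xh j) / Nd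
      else (if (∑ j, ah i j * xh j) < b i then (b i - ∑ j, ah i j * xh j) / Nd else 0) with hc
    refine ⟨fun i j => ah i j + c i * v j, ?_, ⟨k, ?_⟩, ?_⟩
    case _ =>
      intro i
      have hrow : ∑ j, (ah i j + c i * v j) * xh j = (∑ j, ah i j * xh j) + c i * Nd := by
        rw [← hvmax, Finset.mul_sum, ← Finset.sum_add_distrib]
        apply Finset.sum_congr rfl; intro j _; ring
      rw [hrow]
      by_cases hik : i = k
      · subst hik
        simp only [hc, if_pos rfl]
        rw [div_mul_cancel₀ _ hNd0.ne']
        linarith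
      · simp only [hc, if_neg hik]
        split_ifs with h2
        · rw [div_mul_cancel₀ _ hNd0.ne']; linarith
        · have : c i * Nd = 0 := by simp [hc, hik, h2]
          push_neg at h2
          simp only [ge_iff_le]
          nlinarith
    case _ =>
      have hrow : ∑ j, (ah k j + c k * v j) * xh j = (∑ j, ah k j * xh j) + c k * Nd := by
        rw [← hvmax, Finset.mul_sum, ← Finset.sum_add_distrib]
        apply Finset.sum_congr rfl; intro j _; ring
      rw [hrow]
      simp only [hc, if_pos rfl]
      rw [div_mul_cancel₀ _ hNd0.ne']
      ring
    case _ =>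
      have hNrow : ∀ i, N ((fun j => ah i j + c i * v j) - ah i) = |c i| := by
        intro i
        have : ((fun j => ah i j + c i * v j) - ah i) = c i • v := by
          funext j; simp [Pi.smul_apply, smul_eq_mul]
        rw [this, hN_smul, hv, mul_one]
      have hterm : ∀ i, ξ i * N ((fun j => ah i j + c i * v j) - ah i) =
          if i = k then f k else g i := by
        intro i
        rw [hNrow]
        by_cases hik : i = k
        · subst hik
          rw [if_pos rfl]
          have hci : c i = (b i - ∑ j, ah i j * xh j) / Nd := by simp [hc]
          rw [hci, hf, abs_div, abs_of_pos hNd0, abs_sub_comm]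
          ring
        · rw [if_neg hik]
          have hci : c i = if (∑ j, ah i j * xh j) < b i then
              (b i - ∑ j, ah i j * xh j) / Nd else 0 := by simp [hc, hik]
          rw [hci, hg]
          split_ifs with h2
          · rw [hf, abs_div, abs_of_pos hNd0, abs_sub_comm]
            ring
          · simp
      rw [← Finset.add_sum_erase _ _ (Finset.mem_univ k)]
      congr 1
      · rw [hterm k]; simp
      · apply Finset.sum_congr rfl
        intro i hi
        rw [hterm i, if_neg (Finset.ne_of_mem_erase hi)]
  · -- lower bound
    rintro r ⟨A, hfeas, ⟨ihat, hact⟩, rfl⟩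
    apply le_trans (Finset.inf'_le _ (Finset.mem_univ ihat))
    rw [← Finset.add_sum_erase _ (fun i => ξ i * N (A i - ah i)) (Finset.mem_univ ihat)]
    apply add_le_add
    · exact hfle A ihat hact
    · apply Finset.sum_le_sum
      intro i _
      exact hgle A i (hfeas i)
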